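/- arXiv:2502.10665 — 4 statements merged into one kernel-verified Lean document; each statement's English description precedes it below -/
import Mathlib

section
/- Let t_1, …, t_{n+1} ∈ ℂ be n + 1 distinct nodes, let 0 ≤ ℓ ≤ n + 1, and let y_1, …, y_ℓ ∈ ℂ. Let r = p/q be a rational function of type (n, n), i.e., p, q ∈ ℂ[X] coprime with q ≠ 0, deg p ≤ n, deg q ≤ n, and suppose r satisfies the interpolation conditions r(t_j) = y_j for j = 1, …, ℓ, i.e., q(t_j) ≠ 0 and p(t_j) = y_j·q(t_j) for all j ∈ {1, …, ℓ}. Then there exist weights β = (β_1, …, β_{n+1}) ∈ ℂ^{n+1} and α = (α_{ℓ+1}, …, α_{n+1}) ∈ ℂ^{n+1−ℓ} such that, setting D(X) = Σ_{j=1}^{n+1} β_j ∏_{k≠j} (X − t_k) and N(X) = Σ_{j=1}^{ℓ} β_j y_j ∏_{k≠j} (X − t_k) + Σ_{j=ℓ+1}^{n+1} α_j ∏_{k≠j} (X − t_k), one has D ≠ 0 and p·D = q·N in ℂ[X]; moreover, for each j with ℓ + 1 ≤ j ≤ n + 1 such that t_j is a pole of r (i.e., q(t_j) = 0), the corresponding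 weight satisfies β_j = 0. -/
open Polynomial Finset

private lemma lagrange_rep (n : ℕ) (t : Fin (n + 1) → ℂ) (ht : Function.Injective t)
    (f : Polynomial ℂ) (hf : f.degree ≤ (n : WithBot ℕ)) :
    (∑ j : Fin (n + 1),
        Polynomial.C (f.eval (t j) * (∏ k ∈ Finset.univ.erase j, (t j - t k))⁻¹) *
      ∏ k ∈ Finset.univ.erase j, (Polynomial.X - Polynomial.C (t k))) = f := by
  classical
  have hinj : Set.InjOn t (Finset.univ : Finset (Fin (n + 1))) := ht.injOn
  have hcard : (#(Finset.univ : Finset (Fin (n + 1))) : WithBot ℕ) = ((n + 1 : ℕ) : WithBot ℕ) := by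
    simp
  have hdeg : f.degree < #(Finset.univ : Finset (Fin (n + 1))) := by
    rw [hcard]
    exact lt_of_le_of_lt hf (by exact_mod_cast Nat.lt_succ_self n)
  have hbasis : ∀ j : Fin (n + 1), Lagrange.basis Finset.univ t j =
      Polynomial.C (∏ k ∈ Finset.univ.erase j, (t j - t k))⁻¹ *
        ∏ k ∈ Finset.univ.erase j, (Polynomial.X - Polynomial.C (t k)) := by
    intro j
    rw [Lagrange.basis]
    simp only [Lagrange.basisDivisor]
    rw [Finset.prod_mul_distrib]
    congr 1
    rw [← Finset.prod_inv_distrib, map_prod]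
  have := Lagrange.eq_interpolate hinj hdeg
  conv_rhs => rw [this]
  rw [Lagrange.interpolate_apply]
  refine Finset.sum_congr rfl fun j _ => ?_
  rw [hbasis j, map_mul, mul_assoc]

/-- **Interpolation-constrained barycentric parameterization** (Theorem 2.2 of the
paper). Given n+1 distinct support points t_1, …, t_{n+1}, 0 ≤ ℓ ≤ n+1, and values
y_1, …, y_ℓ, any rational function r = p/q of type (n,n) (p, q coprime, q ≠ 0,
deg p ≤ n, deg q ≤ n) satisfying r(t_j) = y_j for j ≤ ℓ can be written in the
interpolation-constrained barycentric form: there exist weights β ∈ ℂ^{n+1} and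
α (indexed by j ≥ ℓ) such that, with
D(X) = Σ_{j} β_j ∏_{k≠j}(X − t_k) and
N(X) = Σ_{j<ℓ} β_j y_j ∏_{k≠j}(X − t_k) + Σ_{j≥ℓ} α_j ∏_{k≠j}(X − t_k),
one has D ≠ 0 and p·D = q·N; and β_j = 0 whenever j ≥ ℓ and t_j is a pole of r. -/
theorem barycentric_parameterization_interp (n ℓ : ℕ) (hℓ : ℓ ≤ n + 1)
    (t : Fin (n + 1) → ℂ) (ht : Function.Injective t)
    (y : Fin (n + 1) → ℂ)
    (p q : Polynomial ℂ) (hq : q ≠ 0) (hcop : IsCoprime p q)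
    (hpdeg : p.degree ≤ (n : WithBot ℕ)) (hqdeg : q.degree ≤ (n : WithBot ℕ))
    (hinterp : ∀ j : Fin (n + 1), (j : ℕ) < ℓ →
      q.eval (t j) ≠ 0 ∧ p.eval (t j) = y j * q.eval (t j)) :
    ∃ β α : Fin (n + 1) → ℂ,
      (∑ j : Fin (n + 1), Polynomial.C (β j) *
          ∏ k ∈ Finset.univ.erase j, (Polynomial.X - Polynomial.C (t k))) ≠ 0 ∧
      p * (∑ j : Fin (n + 1), Polynomial.C (β j) *
          ∏ k ∈ Finset.univ.erase j, (Polynomial.X - Polynomial.C (t k))) =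
      q * (∑ j : Fin (n + 1),
            Polynomial.C (if (j : ℕ) < ℓ then β j * y j else α j) *
          ∏ k ∈ Finset.univ.erase j, (Polynomial.X - Polynomial.C (t k))) ∧
      (∀ j : Fin (n + 1), ℓ ≤ (j : ℕ) → q.eval (t j) = 0 → β j = 0) := by
  classical
  set w : Fin (n + 1) → ℂ := fun j => ∏ k ∈ Finset.univ.erase j, (t j - t k) with hw
  refine ⟨fun j => q.eval (t j) * (w j)⁻¹, fun j => p.eval (t j) * (w j)⁻¹, ?_, ?_, ?_⟩
  · rw [lagrange_rep n t ht q hqdeg]; exact hq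
  · rw [lagrange_rep n t ht q hqdeg]
    have hN : (∑ j : Fin (n + 1),
        Polynomial.C (if (j : ℕ) < ℓ then q.eval (t j) * (w j)⁻¹ * y j
          else p.eval (t j) * (w j)⁻¹) *
        ∏ k ∈ Finset.univ.erase j, (Polynomial.X - Polynomial.C (t k))) =
        ∑ j : Fin (n + 1),
          Polynomial.C (p.eval (t j) * (w j)⁻¹) *
          ∏ k ∈ Finset.univ.erase j, (Polynomial.X - Polynomial.C (t k)) := by
      refine Finset.sum_congr rfl fun j _ => ?_
      congr 2
      split_ifs with h
      · rw [(hinterp j h).2]; ring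
      · rfl
    rw [hN, lagrange_rep n t ht p hpdeg, mul_comm]
  · intro j _ h
    simp [h]
end

section
/- (Strong duality: sufficient condition for global optimality.) Let w* ∈ S be a maximizer of the dual problem, i.e., d(w) ≤ d(w*) for all w ∈ S. Suppose the coefficient pair (α̃, β̃) attains d(w*), i.e., Σ_j w*_j |q̃(x_j)|² = 1 and Σ_j w*_j |f_j q̃(x_j) − p̃(x_j)|² = d(w*), where (p̃, q̃) is the corresponding numerator/denominator pair; suppose β̃_j ≠ 0 for all j ∈ {1, …, ℓ} and q̃(x_j) ≠ 0 for all j ∈ {1, …, m}; and suppose √(d(w*)) = e(ξ̃) := max_{1≤j≤m} |f_j − p̃(x_j)/q̃(x_j)|. Then ξ̃ = p̃/q̃ is a global solution of the interpolation-constrained minimax problem over the barycentric family: for every coefficient pair (α̂, β̂) with β̂_j ≠ 0 for all j ∈ {1, …, ℓ} and q̂(x_j) ≠ 0 for all j ∈ {1, …, m}, one has max_{1≤j≤m} |f_j − p̂(x_j)/q̂(x_j)| ≥ e(ξ̃); consequently strong duality holds: sup_{w ∈ S} d(w) = e(ξ̃)². -/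
open Finset

/-- The denominator of the interpolation-constrained barycentric form:
q(z) = Σ_{j=1}^{n+1} β_j/(z − t_j). -/
noncomputable def baryQ {n : ℕ} (t β : Fin (n + 1) → ℂ) (z : ℂ) : ℂ :=
  ∑ j, β j / (z - t j)

/-- The numerator of the interpolation-constrained barycentric form:
p(z) = Σ_{j<ℓ} β_j y_j/(z − t_j) + Σ_{j≥ℓ} α_j/(z − t_j). -/
noncomputable def baryP {n : ℕ} (ℓ : ℕ) (t y α β : Fin (n + 1) → ℂ) (z : ℂ) : ℂ :=
  ∑ j : Fin (n + 1), (if (j : ℕ) < ℓ then β j * y j else α j) / (z - t j)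

/-- The probability simplex S = {w ∈ ℝ^m : w ≥ 0, Σ_j w_j = 1}. -/
def inS {m : ℕ} (w : Fin m → ℝ) : Prop :=
  (∀ j, 0 ≤ w j) ∧ ∑ j, w j = 1

/-- The Lagrange dual function
d(w) = inf { Σ_j w_j |f_j q(x_j) − p(x_j)|² : (α, β), Σ_j w_j |q(x_j)|² = 1 }. -/
noncomputable def dualFun {n m : ℕ} (ℓ : ℕ) (t y : Fin (n + 1) → ℂ)
    (x f : Fin m → ℂ) (w : Fin m → ℝ) : ℝ :=
  sInf {r : ℝ | ∃ α β : Fin (n + 1) → ℂ,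
    (∑ j, w j * ‖baryQ t β (x j)‖ ^ 2) = 1 ∧
    r = ∑ j, w j * ‖f j * baryQ t β (x j) - baryP ℓ t y α β (x j)‖ ^ 2}

lemma baryQ_smul {n : ℕ} (t β : Fin (n + 1) → ℂ) (c z : ℂ) :
    baryQ t (fun j => c * β j) z = c * baryQ t β z := by
  simp [baryQ, Finset.mul_sum, mul_div_assoc]

lemma baryP_smul {n : ℕ} (ℓ : ℕ) (t y α β : Fin (n + 1) → ℂ) (c z : ℂ) :
    baryP ℓ t y (fun j => c * α j) (fun j => c * β j) z = c * baryP ℓ t y α β z := by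
  simp only [baryP, Finset.mul_sum]
  refine Finset.sum_congr rfl fun j _ => ?_
  split_ifs <;> ring

/-- **Strong duality: sufficient condition for global optimality** (Theorem 5.2 of
the paper). If w* maximizes the dual problem, (α̃, β̃) attains d(w*) with
β̃_j ≠ 0 for j ≤ ℓ and q̃ nonvanishing at the sample nodes, and
√(d(w*)) = e(ξ̃) = max_j |f_j − ξ̃(x_j)|, then ξ̃ = p̃/q̃ is a global solution of
the interpolation-constrained minimax problem over the barycentric family, and
strong duality sup_{w ∈ S} d(w) = e(ξ̃)² holds. -/
theorem strong_duality {n m : ℕ} (ℓ : ℕ) (hℓ : ℓ ≤ n + 1) (hm : 0 < m)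
    (t : Fin (n + 1) → ℂ) (ht : Function.Injective t) (y : Fin (n + 1) → ℂ)
    (x f : Fin m → ℂ) (hxt : ∀ i j, x i ≠ t j)
    (wstar : Fin m → ℝ) (hwS : inS wstar)
    (hwmax : ∀ w : Fin m → ℝ, inS w → dualFun ℓ t y x f w ≤ dualFun ℓ t y x f wstar)
    (αt βt : Fin (n + 1) → ℂ)
    (hfeas : (∑ j, wstar j * ‖baryQ t βt (x j)‖ ^ 2) = 1)
    (hattain : (∑ j, wstar j * ‖f j * baryQ t βt (x j) - baryP ℓ t y αt βt (x j)‖ ^ 2) =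
      dualFun ℓ t y x f wstar)
    (hβ : ∀ j : Fin (n + 1), (j : ℕ) < ℓ → βt j ≠ 0)
    (hqx : ∀ j, baryQ t βt (x j) ≠ 0)
    (hsd : Real.sqrt (dualFun ℓ t y x f wstar) =
      ⨆ j, ‖f j - baryP ℓ t y αt βt (x j) / baryQ t βt (x j)‖) :
    (∀ αh βh : Fin (n + 1) → ℂ,
      (∀ j : Fin (n + 1), (j : ℕ) < ℓ → βh j ≠ 0) →
      (∀ j, baryQ t βh (x j) ≠ 0) →
      (⨆ j, ‖f j - baryP ℓ t y αt βt (x j) / baryQ t βt (x j)‖) ≤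
        ⨆ j, ‖f j - baryP ℓ t y αh βh (x j) / baryQ t βh (x j)‖) ∧
    sSup {r : ℝ | ∃ w : Fin m → ℝ, inS w ∧ r = dualFun ℓ t y x f w} =
      (⨆ j, ‖f j - baryP ℓ t y αt βt (x j) / baryQ t βt (x j)‖) ^ 2 := by
  haveI : Nonempty (Fin m) := ⟨⟨0, hm⟩⟩
  have hd0 : 0 ≤ dualFun ℓ t y x f wstar := by
    rw [← hattain]
    exact Finset.sum_nonneg fun j _ => mul_nonneg (hwS.1 j) (by positivity)
  have key : ∀ αh βh : Fin (n + 1) → ℂ, (∀ j, baryQ t βh (x j) ≠ 0) →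
      dualFun ℓ t y x f wstar ≤
        (⨆ j, ‖f j - baryP ℓ t y αh βh (x j) / baryQ t βh (x j)‖) ^ 2 := by
    intro αh βh hq
    have heh_le : ∀ j, ‖f j - baryP ℓ t y αh βh (x j) / baryQ t βh (x j)‖ ≤
        ⨆ j, ‖f j - baryP ℓ t y αh βh (x j) / baryQ t βh (x j)‖ :=
      fun j => le_ciSup (Set.Finite.bddAbove (Set.finite_range
        (fun j => ‖f j - baryP ℓ t y αh βh (x j) / baryQ t βh (x j)‖))) j
    set eh := ⨆ j, ‖f j - baryP ℓ t y αh βh (x j) / baryQ t βh (x j)‖ with heh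
    have heh0 : 0 ≤ eh := le_trans (norm_nonneg _) (heh_le (Classical.arbitrary _))
    set σ := ∑ j, wstar j * ‖baryQ t βh (x j)‖ ^ 2 with hσ
    have hσpos : 0 < σ := by
      obtain ⟨j0, hj0⟩ : ∃ j, wstar j ≠ 0 := by
        by_contra h
        push_neg at h
        have := hwS.2
        simp [h] at this
      refine Finset.sum_pos' (fun j _ => mul_nonneg (hwS.1 j) (by positivity)) ⟨j0, Finset.mem_univ _, ?_⟩
      have hw0 : 0 < wstar j0 := lt_of_le_of_ne (hwS.1 j0) (Ne.symm hj0)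
      have hq0 : 0 < ‖baryQ t βh (x j0)‖ ^ 2 := pow_pos (norm_pos_iff.2 (hq j0)) 2
      exact mul_pos hw0 hq0
    set c : ℝ := (Real.sqrt σ)⁻¹ with hc
    have hcpos : 0 < c := inv_pos.2 (Real.sqrt_pos.2 hσpos)
    have hc2 : c ^ 2 * σ = 1 := by
      rw [hc, ← Real.sqrt_inv]
      rw [Real.sq_sqrt (by positivity)]
      field_simp
    have hnormc : ∀ z : ℂ, ‖(c : ℂ) * z‖ ^ 2 = c ^ 2 * ‖z‖ ^ 2 := by
      intro z
      rw [norm_mul, mul_pow, Complex.norm_real, Real.norm_of_nonneg hcpos.le]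
    -- the scaled pair is feasible
    have hfeas' : (∑ j, wstar j * ‖baryQ t (fun j => (c : ℂ) * βh j) (x j)‖ ^ 2) = 1 := by
      have : ∀ j, wstar j * ‖baryQ t (fun j => (c : ℂ) * βh j) (x j)‖ ^ 2
          = c ^ 2 * (wstar j * ‖baryQ t βh (x j)‖ ^ 2) := by
        intro j; rw [baryQ_smul, hnormc]; ring
      rw [Finset.sum_congr rfl fun j _ => this j, ← Finset.mul_sum, ← hσ, hc2]
    set r := ∑ j, wstar j *
        ‖f j * baryQ t (fun j => (c : ℂ) * βh j) (x j) -
          baryP ℓ t y (fun j => (c : ℂ) * αh j) (fun j => (c : ℂ) * βh j) (x j)‖ ^ 2 with hr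
    have hmem : r ∈ {r : ℝ | ∃ α β : Fin (n + 1) → ℂ,
        (∑ j, wstar j * ‖baryQ t β (x j)‖ ^ 2) = 1 ∧
        r = ∑ j, wstar j * ‖f j * baryQ t β (x j) - baryP ℓ t y α β (x j)‖ ^ 2} :=
      ⟨fun j => (c : ℂ) * αh j, fun j => (c : ℂ) * βh j, hfeas', rfl⟩
    have hbdd : BddBelow {r : ℝ | ∃ α β : Fin (n + 1) → ℂ,
        (∑ j, wstar j * ‖baryQ t β (x j)‖ ^ 2) = 1 ∧
        r = ∑ j, wstar j * ‖f j * baryQ t β (x j) - baryP ℓ t y α β (x j)‖ ^ 2} := by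
      refine ⟨0, fun s hs => ?_⟩
      obtain ⟨α, β, _, hs⟩ := hs
      rw [hs]
      exact Finset.sum_nonneg fun j _ => mul_nonneg (hwS.1 j) (by positivity)
    have hdle : dualFun ℓ t y x f wstar ≤ r := csInf_le hbdd hmem
    have hrle : r ≤ eh ^ 2 := by
      have hterm : ∀ j, wstar j *
          ‖f j * baryQ t (fun j => (c : ℂ) * βh j) (x j) -
            baryP ℓ t y (fun j => (c : ℂ) * αh j) (fun j => (c : ℂ) * βh j) (x j)‖ ^ 2
          ≤ eh ^ 2 * (c ^ 2 * (wstar j * ‖baryQ t βh (x j)‖ ^ 2)) := by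
        intro j
        rw [baryQ_smul, baryP_smul]
        have hre : f j * ((c : ℂ) * baryQ t βh (x j)) - (c : ℂ) * baryP ℓ t y αh βh (x j)
            = (c : ℂ) * (f j * baryQ t βh (x j) - baryP ℓ t y αh βh (x j)) := by ring
        rw [hre, hnormc]
        have hfq : f j * baryQ t βh (x j) - baryP ℓ t y αh βh (x j)
            = baryQ t βh (x j) * (f j - baryP ℓ t y αh βh (x j) / baryQ t βh (x j)) := by
          rw [mul_sub, mul_div_cancel₀ _ (hq j)]
          ring
        rw [hfq, norm_mul, mul_pow]
        have h1 : ‖f j - baryP ℓ t y αh βh (x j) / baryQ t βh (x j)‖ ^ 2 ≤ eh ^ 2 :=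
          pow_le_pow_left₀ (norm_nonneg _) (heh_le j) 2
        have h2 : 0 ≤ wstar j * (c ^ 2 * ‖baryQ t βh (x j)‖ ^ 2) :=
          mul_nonneg (hwS.1 j) (by positivity)
        calc wstar j * (c ^ 2 * (‖baryQ t βh (x j)‖ ^ 2 *
              ‖f j - baryP ℓ t y αh βh (x j) / baryQ t βh (x j)‖ ^ 2))
            ≤ wstar j * (c ^ 2 * (‖baryQ t βh (x j)‖ ^ 2 * eh ^ 2)) := by
              apply mul_le_mul_of_nonneg_left _ (hwS.1 j)
              apply mul_le_mul_of_nonneg_left _ (by positivity)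
              exact mul_le_mul_of_nonneg_left h1 (by positivity)
          _ = eh ^ 2 * (c ^ 2 * (wstar j * ‖baryQ t βh (x j)‖ ^ 2)) := by ring
      calc r ≤ ∑ j, eh ^ 2 * (c ^ 2 * (wstar j * ‖baryQ t βh (x j)‖ ^ 2)) :=
            Finset.sum_le_sum fun j _ => hterm j
        _ = eh ^ 2 * (c ^ 2 * σ) := by rw [← Finset.mul_sum, ← Finset.mul_sum]
        _ = eh ^ 2 := by rw [hc2, mul_one]
    exact hdle.trans hrle
  constructor
  · intro αh βh hβh hq
    have hk := key αh βh hq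
    set eh := ⨆ j, ‖f j - baryP ℓ t y αh βh (x j) / baryQ t βh (x j)‖ with heh
    have heh0 : 0 ≤ eh := Real.iSup_nonneg fun j => norm_nonneg _
    calc (⨆ j, ‖f j - baryP ℓ t y αt βt (x j) / baryQ t βt (x j)‖)
        = Real.sqrt (dualFun ℓ t y x f wstar) := hsd.symm
      _ ≤ Real.sqrt (eh ^ 2) := Real.sqrt_le_sqrt hk
      _ = eh := Real.sqrt_sq heh0
  · have hgreat : IsGreatest {r : ℝ | ∃ w : Fin m → ℝ, inS w ∧ r = dualFun ℓ t y x f w}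
        (dualFun ℓ t y x f wstar) := by
      constructor
      · exact ⟨wstar, hwS, rfl⟩
      · rintro r ⟨w, hw, rfl⟩
        exact hwmax w hw
    rw [hgreat.csSup_eq, ← hsd, Real.sq_sqrt hd0]
end

section
/- (Complementary slackness.) Let w* ∈ S be a maximizer of the dual problem, suppose the coefficient pair (α̃, β̃) attains d(w*), i.e., Σ_j w*_j |q̃(x_j)|² = 1 and Σ_j w*_j |f_j q̃(x_j) − p̃(x_j)|² = d(w*), suppose β̃_j ≠ 0 for all j ∈ {1, …, ℓ} and q̃(x_j) ≠ 0 for all j ∈ {1, …, m}, and suppose √(d(w*)) = e(ξ̃) := max_{1≤j≤m} |f_j − p̃(x_j)/q̃(x_j)|. Then for every j ∈ {1, …, m}: w*_j · (e(ξ̃) − |f_j − p̃(x_j)/q̃(x_j)|) = 0; equivalently, whenever w*_j > 0, the node x_j is an extreme point, i.e., |f_j − p̃(x_j)/q̃(x_j)| = e(ξ̃). -/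
open Finset

/-- **Complementary slackness** (Theorem 5.2 of the paper). Under the strong-duality
conditions — w* maximizes the dual problem, (α̃, β̃) attains d(w*) with β̃_j ≠ 0
for j ≤ ℓ and q̃ nonvanishing at the sample nodes, and √(d(w*)) = e(ξ̃) — every
sample node satisfies w*_j · (e(ξ̃) − |f_j − ξ̃(x_j)|) = 0; i.e. every node
carrying positive weight is an extreme point. -/
theorem complementary_slackness {n m : ℕ} (ℓ : ℕ) (hℓ : ℓ ≤ n + 1) (hm : 0 < m)
    (t : Fin (n + 1) → ℂ) (ht : Function.Injective t) (y : Fin (n + 1) → ℂ)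
    (x f : Fin m → ℂ) (hxt : ∀ i j, x i ≠ t j)
    (wstar : Fin m → ℝ) (hwS : inS wstar)
    (hwmax : ∀ w : Fin m → ℝ, inS w → dualFun ℓ t y x f w ≤ dualFun ℓ t y x f wstar)
    (αt βt : Fin (n + 1) → ℂ)
    (hfeas : (∑ j, wstar j * ‖baryQ t βt (x j)‖ ^ 2) = 1)
    (hattain : (∑ j, wstar j * ‖f j * baryQ t βt (x j) - baryP ℓ t y αt βt (x j)‖ ^ 2) =
      dualFun ℓ t y x f wstar)
    (hβ : ∀ j : Fin (n + 1), (j : ℕ) < ℓ → βt j ≠ 0)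
    (hqx : ∀ j, baryQ t βt (x j) ≠ 0)
    (hsd : Real.sqrt (dualFun ℓ t y x f wstar) =
      ⨆ j, ‖f j - baryP ℓ t y αt βt (x j) / baryQ t βt (x j)‖) :
    ∀ j : Fin m,
      wstar j * ((⨆ i, ‖f i - baryP ℓ t y αt βt (x i) / baryQ t βt (x i)‖) -
        ‖f j - baryP ℓ t y αt βt (x j) / baryQ t βt (x j)‖) = 0 := by
  intro j
  set e : Fin m → ℝ := fun i => ‖f i - baryP ℓ t y αt βt (x i) / baryQ t βt (x i)‖ with he
  have hle : ∀ i, e i ≤ ⨆ i, e i := fun i =>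
    le_ciSup (Set.Finite.bddAbove (Set.finite_range e)) i
  have he0 : ∀ i, 0 ≤ e i := fun i => norm_nonneg _
  have hE0 : (0:ℝ) ≤ ⨆ i, e i := le_trans (he0 ⟨0, hm⟩) (hle _)
  have hd0 : 0 ≤ dualFun ℓ t y x f wstar := by
    rw [← hattain]
    exact Finset.sum_nonneg fun i _ => mul_nonneg (hwS.1 i) (sq_nonneg _)
  have hsd' : Real.sqrt (dualFun ℓ t y x f wstar) = ⨆ i, e i := hsd
  have hEd : (⨆ i, e i) ^ 2 = dualFun ℓ t y x f wstar := by
    rw [← hsd']; exact Real.sq_sqrt hd0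
  have heq : ∀ i, ‖f i * baryQ t βt (x i) - baryP ℓ t y αt βt (x i)‖
      = e i * ‖baryQ t βt (x i)‖ := by
    intro i
    show _ = ‖f i - baryP ℓ t y αt βt (x i) / baryQ t βt (x i)‖ * ‖baryQ t βt (x i)‖
    rw [← norm_mul]
    congr 1
    rw [sub_mul, div_mul_cancel₀ _ (hqx i)]
  have h1 : ∑ i, wstar i * (e i) ^ 2 * ‖baryQ t βt (x i)‖ ^ 2
      = (⨆ i, e i) ^ 2 := by
    rw [hEd, ← hattain]
    refine Finset.sum_congr rfl fun i _ => ?_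
    rw [heq i, mul_pow]; ring
  have h2 : ∑ i, wstar i * (⨆ i, e i) ^ 2 * ‖baryQ t βt (x i)‖ ^ 2
      = (⨆ i, e i) ^ 2 := by
    calc ∑ i, wstar i * (⨆ i, e i) ^ 2 * ‖baryQ t βt (x i)‖ ^ 2
        = (⨆ i, e i) ^ 2 * ∑ i, wstar i * ‖baryQ t βt (x i)‖ ^ 2 := by
          rw [Finset.mul_sum]
          exact Finset.sum_congr rfl fun i _ => by ring
      _ = (⨆ i, e i) ^ 2 := by rw [hfeas]; ring
  have hsum : ∑ i, wstar i * ((⨆ i, e i) ^ 2 - (e i) ^ 2) * ‖baryQ t βt (x i)‖ ^ 2 = 0 := by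
    have : ∑ i, wstar i * ((⨆ i, e i) ^ 2 - (e i) ^ 2) * ‖baryQ t βt (x i)‖ ^ 2
        = (∑ i, wstar i * (⨆ i, e i) ^ 2 * ‖baryQ t βt (x i)‖ ^ 2)
          - ∑ i, wstar i * (e i) ^ 2 * ‖baryQ t βt (x i)‖ ^ 2 := by
      rw [← Finset.sum_sub_distrib]
      exact Finset.sum_congr rfl fun i _ => by ring
    rw [this, h1, h2]; ring
  have hterm : wstar j * ((⨆ i, e i) ^ 2 - (e j) ^ 2) * ‖baryQ t βt (x j)‖ ^ 2 = 0 := by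
    refine (Finset.sum_eq_zero_iff_of_nonneg ?_).mp hsum j (Finset.mem_univ j)
    intro i _
    exact mul_nonneg (mul_nonneg (hwS.1 i)
      (sub_nonneg.mpr (pow_le_pow_left₀ (he0 i) (hle i) 2))) (sq_nonneg _)
  have hq0 : ‖baryQ t βt (x j)‖ ^ 2 ≠ 0 := pow_ne_zero 2 (norm_ne_zero_iff.mpr (hqx j))
  have h3 : wstar j * ((⨆ i, e i) ^ 2 - (e j) ^ 2) = 0 := by
    rcases mul_eq_zero.mp hterm with h | h
    · exact h
    · exact absurd h hq0
  show wstar j * ((⨆ i, e i) - e j) = 0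
  rcases mul_eq_zero.mp h3 with h | h
  · rw [h]; ring
  · have : (⨆ i, e i) = e j := by nlinarith [hle j, he0 j]
    rw [this]; ring
end

section
/- (Lower bound on the number of positive dual weights.) Assume m ≥ 2n + 2 − ℓ. Let w* ∈ S be a maximizer of the dual problem with d(w*) > 0, suppose the coefficient pair (α̃, β̃) attains d(w*), i.e., Σ_j w*_j |q̃(x_j)|² = 1 and Σ_j w*_j |f_j q̃(x_j) − p̃(x_j)|² = d(w*), and suppose β̃_j ≠ 0 for all j ∈ {1, …, ℓ} and q̃(x_j) ≠ 0 for all j ∈ {1, …, m}. Then the number of indices j ∈ {1, …, m} with w*_j > 0 is at least n + 2 − ℓ. -/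
open Finset

/-- **Lower bound on the number of positive dual weights** (proof of Theorem 5.3 of
the paper). Assume m ≥ 2n + 2 − ℓ and the sample nodes are pairwise distinct. If
w* maximizes the dual problem with d(w*) > 0 and (α̃, β̃) attains d(w*) with
β̃_j ≠ 0 for j ≤ ℓ and q̃ nonvanishing at the sample nodes, then w* has at least
n + 2 − ℓ positive entries. -/
theorem positive_weights_lower_bound {n m : ℕ} (ℓ : ℕ) (hℓ : ℓ ≤ n + 1) (hm : 0 < m)
    (hm2 : 2 * n + 2 - ℓ ≤ m)
    (t : Fin (n + 1) → ℂ) (ht : Function.Injective t) (y : Fin (n + 1) → ℂ)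
    (x f : Fin m → ℂ) (hx : Function.Injective x) (hxt : ∀ i j, x i ≠ t j)
    (wstar : Fin m → ℝ) (hwS : inS wstar)
    (hwmax : ∀ w : Fin m → ℝ, inS w → dualFun ℓ t y x f w ≤ dualFun ℓ t y x f wstar)
    (hdpos : 0 < dualFun ℓ t y x f wstar)
    (αt βt : Fin (n + 1) → ℂ)
    (hfeas : (∑ j, wstar j * ‖baryQ t βt (x j)‖ ^ 2) = 1)
    (hattain : (∑ j, wstar j * ‖f j * baryQ t βt (x j) - baryP ℓ t y αt βt (x j)‖ ^ 2) =
      dualFun ℓ t y x f wstar)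
    (hβ : ∀ j : Fin (n + 1), (j : ℕ) < ℓ → βt j ≠ 0)
    (hqx : ∀ j, baryQ t βt (x j) ≠ 0) :
    n + 2 - ℓ ≤ {j : Fin m | 0 < wstar j}.ncard := by
  classical
  by_contra hcon
  push_neg at hcon
  set T : Finset (Fin m) := Finset.univ.filter (fun j => 0 < wstar j) with hT
  have hTset : {j : Fin m | 0 < wstar j} = ↑T := by ext j; simp [hT]
  rw [hTset, Set.ncard_coe_finset] at hcon
  -- T is nonempty
  have hTne : T.Nonempty := by
    by_contra h
    rw [Finset.not_nonempty_iff_eq_empty] at h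
    have hz : ∑ j, wstar j = 0 := Finset.sum_eq_zero (fun j _ => by
      by_contra hj
      have hpos : 0 < wstar j := lt_of_le_of_ne (hwS.1 j) (Ne.symm hj)
      have : j ∈ T := by simp [hT, hpos]
      simp [h] at this)
    rw [hwS.2] at hz; norm_num at hz
  have hcard1 : 1 ≤ T.card := Finset.Nonempty.card_pos hTne
  have hℓn : ℓ ≤ n := by omega
  have hk : T.card ≤ n + 1 - ℓ := by omega
  -- index set of free coefficients
  set I : Finset (Fin (n+1)) := Finset.univ.filter (fun i => ℓ ≤ (i : ℕ)) with hI
  have hIcard : I.card = n + 1 - ℓ := by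
    rw [hI, Finset.card_filter,
      Fin.sum_univ_eq_sum_range (fun i => if ℓ ≤ i then 1 else 0), ← Finset.card_filter]
    have : (Finset.range (n+1)).filter (fun i => ℓ ≤ i) = Finset.Ico ℓ (n+1) := by
      ext i; simp [Finset.mem_Ico]; omega
    rw [this, Nat.card_Ico]
  have hTI : T.card ≤ I.card := by omega
  set i0 : Fin (n+1) := ⟨n, by omega⟩ with hi0
  have hi0I : i0 ∈ I := by simp [hI, hi0, hℓn]
  -- the simple denominator
  set β' : Fin (n+1) → ℂ := fun i => if i = i0 then (1:ℂ) else 0 with hβ'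
  have hq' : ∀ z : ℂ, baryQ t β' z = 1 / (z - t i0) := by
    intro z
    rw [baryQ, Finset.sum_eq_single i0]
    · simp [hβ']
    · intro i _ hi; simp [hβ', hi]
    · simp
  -- interpolation
  have hxInj : Set.InjOn x ↑T := hx.injOn
  have htInj : Set.InjOn t ↑I := ht.injOn
  set g : Fin m → ℂ := fun j => f j / (x j - t i0) * ∏ i ∈ I, (x j - t i) with hg
  set P : Polynomial ℂ := Lagrange.interpolate T x g with hP
  set α : Fin (n+1) → ℂ :=
    fun i => P.eval (t i) / ∏ i' ∈ I.erase i, (t i - t i') with hα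
  have hzt : ∀ (j : Fin m) (i : Fin (n+1)), x j - t i ≠ 0 :=
    fun j i => sub_ne_zero_of_ne (hxt j i)
  have key : ∀ j ∈ T, ∑ i ∈ I, α i / (x j - t i) = f j / (x j - t i0) := by
    intro j hj
    have hω : ∏ i ∈ I, (x j - t i) ≠ 0 :=
      Finset.prod_ne_zero_iff.mpr (fun i _ => hzt j i)
    have hdeg : P.degree < I.card := by
      refine lt_of_lt_of_le (Lagrange.degree_interpolate_lt g hxInj) ?_
      exact_mod_cast Nat.cast_le.mpr hTI
    have hPrep : Lagrange.interpolate I t (fun i => P.eval (t i)) = P :=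
      (Lagrange.eq_interpolate htInj hdeg).symm
    have hPz : P.eval (x j) = ∑ i ∈ I, P.eval (t i) * (Lagrange.basis I t i).eval (x j) := by
      conv_lhs => rw [← hPrep]
      simp [Lagrange.interpolate_apply, Polynomial.eval_finset_sum]
    have hterm : ∀ i ∈ I, α i / (x j - t i)
        = P.eval (t i) * (Lagrange.basis I t i).eval (x j) / ∏ i' ∈ I, (x j - t i') := by
      intro i hi
      have hbasis : (Lagrange.basis I t i).eval (x j)
          = (∏ i' ∈ I.erase i, (t i - t i')⁻¹) * ∏ i' ∈ I.erase i, (x j - t i') := by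
        simp [Lagrange.basis, Polynomial.eval_prod, Lagrange.basisDivisor,
          Finset.prod_mul_distrib]
      have hD : ∏ i' ∈ I.erase i, (t i - t i') ≠ 0 :=
        Finset.prod_ne_zero_iff.mpr (fun i' hi' =>
          sub_ne_zero_of_ne (fun h => (Finset.mem_erase.mp hi').1 (ht h).symm))
      have hE : ∏ i' ∈ I.erase i, (x j - t i') ≠ 0 :=
        Finset.prod_ne_zero_iff.mpr (fun i' _ => hzt j i')
      have hprod : ∏ i' ∈ I, (x j - t i')
          = (x j - t i) * ∏ i' ∈ I.erase i, (x j - t i') :=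
        (Finset.mul_prod_erase I _ hi).symm
      have hα' : α i = P.eval (t i) * (∏ i' ∈ I.erase i, (t i - t i'))⁻¹ :=
        div_eq_mul_inv _ _
      rw [hbasis, hprod, hα', (Finset.prod_inv_distrib _).symm]
      rw [show P.eval (t i) * ((∏ i' ∈ I.erase i, (t i - t i')⁻¹) * ∏ i' ∈ I.erase i, (x j - t i'))
          = (P.eval (t i) * ∏ i' ∈ I.erase i, (t i - t i')⁻¹) * ∏ i' ∈ I.erase i, (x j - t i')
        from by ring]
      rw [mul_div_mul_right _ _ hE, Finset.prod_inv_distrib]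
    rw [Finset.sum_congr rfl hterm, ← Finset.sum_div, ← hPz]
    have hnode : P.eval (x j) = g j := Lagrange.eval_interpolate_at_node g hxInj hj
    rw [hnode, hg]
    exact mul_div_cancel_right₀ _ hω
  -- evaluate baryP
  have hp : ∀ j ∈ T, baryP ℓ t y α β' (x j) = f j / (x j - t i0) := by
    intro j hj
    rw [baryP, ← Finset.sum_filter_add_sum_filter_not (Finset.univ : Finset (Fin (n+1)))
      (fun i => ℓ ≤ (i : ℕ))]
    have h2 : ∑ i ∈ Finset.univ.filter (fun i : Fin (n+1) => ¬ ℓ ≤ (i : ℕ)),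
        (if (i : ℕ) < ℓ then β' i * y i else α i) / (x j - t i) = 0 := by
      refine Finset.sum_eq_zero (fun i hi => ?_)
      simp only [Finset.mem_filter, Finset.mem_univ, true_and, not_le] at hi
      have h0 : (i0 : ℕ) = n := rfl
      have hine : i ≠ i0 := by
        intro h; rw [h, h0] at hi; omega
      rw [if_pos hi]
      simp [hβ', hine]
    rw [h2, add_zero]
    have h1 : ∑ i ∈ Finset.univ.filter (fun i : Fin (n+1) => ℓ ≤ (i : ℕ)),
        (if (i : ℕ) < ℓ then β' i * y i else α i) / (x j - t i)
        = ∑ i ∈ I, α i / (x j - t i) := by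
      refine Finset.sum_congr (by rw [hI]) (fun i hi => ?_)
      simp only [hI, Finset.mem_filter, Finset.mem_univ, true_and] at hi
      rw [if_neg (not_lt.mpr hi)]
    rw [h1, key j hj]
  -- the normalization
  set S0 : ℝ := ∑ j, wstar j * ‖baryQ t β' (x j)‖ ^ 2 with hS0
  have hS0pos : 0 < S0 := by
    obtain ⟨j1, hj1⟩ := hTne
    have hj1pos : 0 < wstar j1 := by simpa [hT] using hj1
    refine Finset.sum_pos' (fun j _ => mul_nonneg (hwS.1 j) (by positivity)) ⟨j1, Finset.mem_univ j1, ?_⟩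
    have : baryQ t β' (x j1) ≠ 0 := by
      rw [hq']
      exact one_div_ne_zero (hzt j1 i0)
    exact mul_pos hj1pos (pow_pos (norm_pos_iff.mpr this) 2)
  set c : ℝ := (Real.sqrt S0)⁻¹ with hc
  have hc2 : c ^ 2 = S0⁻¹ := by
    rw [hc, ← Real.sqrt_inv, Real.sq_sqrt (by positivity)]
  set α2 : Fin (n+1) → ℂ := fun i => (c : ℂ) * α i with hα2
  set β2 : Fin (n+1) → ℂ := fun i => (c : ℂ) * β' i with hβ2
  have hQs : ∀ z, baryQ t β2 z = (c : ℂ) * baryQ t β' z := by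
    intro z
    simp [baryQ, hβ2, Finset.mul_sum, mul_div_assoc]
  have hPs : ∀ z, baryP ℓ t y α2 β2 z = (c : ℂ) * baryP ℓ t y α β' z := by
    intro z
    rw [baryP, baryP, Finset.mul_sum]
    refine Finset.sum_congr rfl (fun i _ => ?_)
    rw [hα2, hβ2]
    by_cases h : (i : ℕ) < ℓ <;> simp [h, mul_div_assoc, mul_assoc]
  have hnc : ∀ z : ℂ, ‖(c : ℂ) * z‖ ^ 2 = c ^ 2 * ‖z‖ ^ 2 := by
    intro z
    rw [norm_mul, mul_pow, Complex.norm_real, Real.norm_eq_abs, sq_abs]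
  have hfeas2 : (∑ j, wstar j * ‖baryQ t β2 (x j)‖ ^ 2) = 1 := by
    have : ∀ j, wstar j * ‖baryQ t β2 (x j)‖ ^ 2
        = c ^ 2 * (wstar j * ‖baryQ t β' (x j)‖ ^ 2) := by
      intro j; rw [hQs, hnc]; ring
    rw [Finset.sum_congr rfl (fun j _ => this j), ← Finset.mul_sum, ← hS0, hc2]
    exact inv_mul_cancel₀ (ne_of_gt hS0pos)
  have hval : (∑ j, wstar j * ‖f j * baryQ t β2 (x j) - baryP ℓ t y α2 β2 (x j)‖ ^ 2) = 0 := by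
    refine Finset.sum_eq_zero (fun j _ => ?_)
    by_cases hj : j ∈ T
    · have : f j * baryQ t β2 (x j) - baryP ℓ t y α2 β2 (x j) = 0 := by
        rw [hQs, hPs, hq', hp j hj]
        ring
      rw [this]; simp
    · have : wstar j = 0 := by
        by_contra h
        exact hj (by simp [hT, lt_of_le_of_ne (hwS.1 j) (Ne.symm h)])
      rw [this]; ring
  -- conclude
  have hmem : (0:ℝ) ∈ {r : ℝ | ∃ α β : Fin (n + 1) → ℂ,
      (∑ j, wstar j * ‖baryQ t β (x j)‖ ^ 2) = 1 ∧
      r = ∑ j, wstar j * ‖f j * baryQ t β (x j) - baryP ℓ t y α β (x j)‖ ^ 2} :=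
    ⟨α2, β2, hfeas2, hval.symm⟩
  have hbdd : BddBelow {r : ℝ | ∃ α β : Fin (n + 1) → ℂ,
      (∑ j, wstar j * ‖baryQ t β (x j)‖ ^ 2) = 1 ∧
      r = ∑ j, wstar j * ‖f j * baryQ t β (x j) - baryP ℓ t y α β (x j)‖ ^ 2} := by
    refine ⟨0, fun r hr => ?_⟩
    obtain ⟨a, b, -, hr⟩ := hr
    rw [hr]
    exact Finset.sum_nonneg (fun j _ => mul_nonneg (hwS.1 j) (by positivity))
  have : dualFun ℓ t y x f wstar ≤ 0 := csInf_le hbdd hmem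
  linarith
end
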